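/- If X is Weibull distributed with shape α > 0 and scale β > 0, then E[log X] = log β + ψ(1)/α, where ψ is the digamma function (ψ(1) = −γ, the negative Euler–Mascheroni constant). -/

import Mathlib

open MeasureTheory ProbabilityTheory Real

/-- CDF of the Weibull distribution with shape `α` and scale `β`. -/
noncomputable def weibullCDF (α β x : ℝ) : ℝ :=
  if x ≤ 0 then 0 else 1 - Real.exp (-(x / β) ^ α)

/-- `X` is Weibull(α, β)-distributed under `μ`. -/
def IsWeibull {Ω : Type*} [MeasurableSpace Ω] (μ : Measure Ω) (X : Ω → ℝ)
    (α β : ℝ) : Prop :=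
  ∀ x : ℝ, μ {ω | X ω ≤ x} = ENNReal.ofReal (weibullCDF α β x)

open Set Filter Asymptotics Topology

open MeasureTheory ProbabilityTheory Real Set Filter Asymptotics Topology

lemma exp_neg_isBigO_rpow_atTop (a : ℝ) :
    (fun t : ℝ => ((Real.exp (-t) : ℝ) : ℂ)) =O[atTop] (· ^ (-a)) := by
  rw [← isBigO_norm_left]
  simp_rw [Complex.norm_real, isBigO_norm_left]
  simpa only [neg_one_mul] using (isLittleO_exp_neg_mul_rpow_atTop zero_lt_one _).isBigO

lemma key_pair :
    MellinConvergent (fun t : ℝ => Real.log t • ((Real.exp (-t) : ℝ) : ℂ)) 1 ∧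
      HasDerivAt (mellin fun t : ℝ => ((Real.exp (-t) : ℝ) : ℂ))
        (mellin (fun t : ℝ => Real.log t • ((Real.exp (-t) : ℝ) : ℂ)) 1) 1 := by
  refine mellin_hasDerivAt_of_isBigO_rpow (a := 2) (b := 0) ?_ (exp_neg_isBigO_rpow_atTop 2)
    (by norm_num) ?_ (by norm_num)
  · refine (Continuous.continuousOn ?_).locallyIntegrableOn measurableSet_Ioi
    exact Complex.continuous_ofReal.comp (Real.continuous_exp.comp continuous_neg)
  · simp_rw [neg_zero, rpow_zero]
    refine isBigO_const_of_tendsto (?_ : Tendsto _ _ (𝓝 (1 : ℂ))) one_ne_zero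
    rw [(by simp : (1 : ℂ) = ((Real.exp (-0) : ℝ) : ℂ))]
    exact (Complex.continuous_ofReal.comp
      (Real.continuous_exp.comp continuous_neg)).continuousWithinAt

lemma integrable_log_mul_exp_neg :
    IntegrableOn (fun t : ℝ => Real.log t * Real.exp (-t)) (Ioi 0) := by
  have h := key_pair.1
  rw [MellinConvergent] at h
  have h2 : IntegrableOn (fun t : ℝ => ((Real.log t * Real.exp (-t) : ℝ) : ℂ)) (Ioi 0) := by
    refine (integrableOn_congr_fun (fun t ht => ?_) measurableSet_Ioi).mp h
    simp [Complex.ofReal_mul, sub_self, Complex.cpow_zero]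
  have h3 := h2.re
  refine (integrableOn_congr_fun (fun t ht => ?_) measurableSet_Ioi).mpr h3
  exact (Complex.ofReal_re _).symm

lemma integral_log_mul_exp_neg :
    ∫ t in Ioi 0, Real.log t * Real.exp (-t) = -Real.eulerMascheroniConstant := by
  have h := key_pair.2
  rw [← Complex.GammaIntegral_eq_mellin] at h
  have hval : mellin (fun t : ℝ => Real.log t • ((Real.exp (-t) : ℝ) : ℂ)) 1
      = ((∫ t in Ioi 0, Real.log t * Real.exp (-t) : ℝ) : ℂ) := by
    rw [mellin]
    have : ((∫ t in Ioi 0, Real.log t * Real.exp (-t) : ℝ) : ℂ)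
        = ∫ t in Ioi 0, ((Real.log t * Real.exp (-t) : ℝ) : ℂ) := (integral_ofReal).symm
    rw [this]
    refine setIntegral_congr_fun measurableSet_Ioi (fun t ht => ?_)
    simp [Complex.ofReal_mul, sub_self, Complex.cpow_zero]
  rw [hval] at h
  -- transfer from GammaIntegral to Gamma
  have hΓ : HasDerivAt Complex.Gamma ((∫ t in Ioi 0, Real.log t * Real.exp (-t) : ℝ) : ℂ) 1 := by
    refine h.congr_of_eventuallyEq ?_
    have hmem : {s : ℂ | 0 < s.re} ∈ nhds (1 : ℂ) := by
      refine (Complex.continuous_re.isOpen_preimage _ isOpen_Ioi).mem_nhds ?_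
      simp
    filter_upwards [hmem] with s hs
    exact Complex.Gamma_eq_integral hs
  have hre : HasDerivAt (fun x : ℝ => ((Real.Gamma x : ℝ) : ℂ))
      ((∫ t in Ioi 0, Real.log t * Real.exp (-t) : ℝ) : ℂ) 1 := by
    have := hΓ.comp_ofReal (z := 1)
    refine this.congr_of_eventuallyEq (Eventually.of_forall (fun x => ?_))
    simp [Complex.Gamma_ofReal]
  have hre2 : HasDerivAt (fun x : ℝ => ((Real.Gamma x : ℝ) : ℂ))
      ((-Real.eulerMascheroniConstant : ℝ) : ℂ) 1 :=
    Real.hasDerivAt_Gamma_one.ofReal_comp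
  have := hre.unique hre2
  exact_mod_cast this

open ProbabilityTheory in
lemma expMeasure_Iic (x : ℝ) :
    expMeasure 1 (Iic x) = ENNReal.ofReal (if 0 ≤ x then 1 - Real.exp (-x) else 0) := by
  have : IsProbabilityMeasure (expMeasure 1) := isProbabilityMeasure_expMeasure one_pos
  rw [← ProbabilityTheory.ofReal_cdf (expMeasure 1) x]
  have := cdf_expMeasure_eq one_pos x
  rw [this]
  simp

open ProbabilityTheory in
lemma expMeasure_Iic_zero : expMeasure 1 (Iic 0) = 0 := by
  rw [expMeasure_Iic]; simp

open ProbabilityTheory in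
lemma map_expMeasure_Iic (α β : ℝ) (hα : 0 < α) (hβ : 0 < β) (x : ℝ) :
    (expMeasure 1).map (fun t => β * t ^ α⁻¹) (Iic x)
      = ENNReal.ofReal (weibullCDF α β x) := by
  have hα' : (0:ℝ) < α⁻¹ := inv_pos.mpr hα
  have hgm : Measurable fun t : ℝ => β * t ^ α⁻¹ :=
    (measurable_id'.pow_const α⁻¹).const_mul β
  rw [Measure.map_apply hgm measurableSet_Iic]
  by_cases hx : x ≤ 0
  · rw [weibullCDF, if_pos hx, ENNReal.ofReal_zero]
    refine measure_mono_null (fun t ht => ?_) expMeasure_Iic_zero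
    simp only [mem_preimage, mem_Iic] at ht ⊢
    by_contra hcon
    push_neg at hcon
    have : 0 < β * t ^ α⁻¹ := mul_pos hβ (Real.rpow_pos_of_pos hcon _)
    linarith
  · push_neg at hx
    set c : ℝ := (x / β) ^ α with hc
    have hc0 : 0 < c := Real.rpow_pos_of_pos (div_pos hx hβ) _
    have hae : ((fun t : ℝ => β * t ^ α⁻¹) ⁻¹' Iic x) =ᵐ[expMeasure 1] Iic c := by
      rw [Filter.eventuallyEq_set]
      have hnull : {t : ℝ | ¬((β * t ^ α⁻¹ ≤ x) ↔ t ≤ c)} ⊆ Iic 0 := by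
        intro t ht
        simp only [mem_setOf_eq] at ht
        by_contra h0
        rw [mem_Iic, not_le] at h0
        apply ht
        rw [← le_div_iff₀' hβ, Real.rpow_inv_le_iff_of_pos h0.le (div_pos hx hβ).le hα]
      have : expMeasure 1 {t : ℝ | ¬((β * t ^ α⁻¹ ≤ x) ↔ t ≤ c)} = 0 :=
        measure_mono_null hnull expMeasure_Iic_zero
      exact (MeasureTheory.ae_iff (p := fun t => (β * t ^ α⁻¹ ≤ x) ↔ t ≤ c)).mpr this
    rw [measure_congr hae, expMeasure_Iic, if_pos hc0.le, weibullCDF, if_neg (not_le.mpr hx)]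

open ProbabilityTheory in
lemma integral_log_expMeasure (α β : ℝ) (hα : 0 < α) (hβ : 0 < β) :
    ∫ t, Real.log (β * t ^ α⁻¹) ∂(expMeasure 1)
      = Real.log β + (-Real.eulerMascheroniConstant) / α := by
  have hα' : (0:ℝ) < α⁻¹ := inv_pos.mpr hα
  have hme : expMeasure 1
      = MeasureTheory.volume.withDensity fun x => ((gammaPDFReal 1 1 x).toNNReal : ENNReal) := by
    rfl
  rw [hme, integral_withDensity_eq_integral_smul (measurable_gammaPDFReal 1 1).real_toNNReal]
  have h1 : ∫ t, (gammaPDFReal 1 1 t).toNNReal • Real.log (β * t ^ α⁻¹)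
      = ∫ t in Ioi (0:ℝ), (gammaPDFReal 1 1 t).toNNReal • Real.log (β * t ^ α⁻¹) := by
    refine (setIntegral_eq_integral_of_forall_compl_eq_zero (fun t ht => ?_)).symm
    simp only [mem_Ioi, not_lt] at ht
    rcases lt_or_eq_of_le ht with ht | ht
    · simp [gammaPDFReal, not_le.mpr ht]
    · subst ht
      rw [Real.zero_rpow (ne_of_gt hα'), mul_zero, Real.log_zero, smul_zero]
  rw [h1]
  have h2 : ∫ t in Ioi (0:ℝ), (gammaPDFReal 1 1 t).toNNReal • Real.log (β * t ^ α⁻¹)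
      = ∫ t in Ioi (0:ℝ),
          (Real.log β * Real.exp (-t) + α⁻¹ * (Real.log t * Real.exp (-t))) := by
    refine setIntegral_congr_fun measurableSet_Ioi (fun t ht => ?_)
    rw [mem_Ioi] at ht
    have hpdf : gammaPDFReal 1 1 t = Real.exp (-t) := by
      simp [gammaPDFReal, ht.le, Real.Gamma_one]
    rw [NNReal.smul_def, Real.coe_toNNReal _ (by rw [hpdf]; positivity), hpdf,
      Real.log_mul (ne_of_gt hβ) (ne_of_gt (Real.rpow_pos_of_pos ht _)),
      Real.log_rpow ht, smul_eq_mul]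
    ring
  have hi1 : IntegrableOn (fun t : ℝ => Real.log β * Real.exp (-t)) (Ioi 0) :=
    ((exp_neg_integrableOn_Ioi 0 one_pos).congr_fun
      (fun t ht => by simp) measurableSet_Ioi).const_mul _
  have hi2 : IntegrableOn (fun t : ℝ => α⁻¹ * (Real.log t * Real.exp (-t))) (Ioi 0) :=
    integrable_log_mul_exp_neg.const_mul _
  rw [h2, integral_add hi1 hi2, integral_const_mul, integral_const_mul,
    integral_exp_neg_Ioi_zero, integral_log_mul_exp_neg, mul_one, div_eq_inv_mul]

theorem weibull_mean_log {Ω : Type*} [MeasurableSpace Ω] (μ : Measure Ω)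
    [IsProbabilityMeasure μ] (X : Ω → ℝ) (α β : ℝ) (hα : 0 < α) (hβ : 0 < β)
    (hm : Measurable X) (hX : IsWeibull μ X α β) :
    ∫ ω, Real.log (X ω) ∂μ = Real.log β + (-Real.eulerMascheroniConstant) / α := by
  have hgm : Measurable fun t : ℝ => β * t ^ α⁻¹ :=
    (measurable_id'.pow_const α⁻¹).const_mul β
  have hmap : μ.map X = (ProbabilityTheory.expMeasure 1).map (fun t => β * t ^ α⁻¹) := by
    have : IsProbabilityMeasure (μ.map X) := Measure.isProbabilityMeasure_map hm.aemeasurable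
    refine Measure.ext_of_Iic _ _ (fun x => ?_)
    rw [Measure.map_apply hm measurableSet_Iic, map_expMeasure_Iic α β hα hβ x]
    exact hX x
  calc ∫ ω, Real.log (X ω) ∂μ = ∫ x, Real.log x ∂(μ.map X) :=
    (integral_map hm.aemeasurable Real.measurable_log.aestronglyMeasurable).symm
  _ = ∫ t, Real.log (β * t ^ α⁻¹) ∂(ProbabilityTheory.expMeasure 1) := by
      rw [hmap, integral_map hgm.aemeasurable Real.measurable_log.aestronglyMeasurable]
  _ = _ := integral_log_expMeasure α β hα hβ
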